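/- Let |φ_0000⟩ ∈ ℂ^16 be the 4-qubit linear cluster state and |φ_1110⟩ = Z₁Z₂Z₃|φ_0000⟩. Then the eigenspace {ψ ∈ ℂ^16 : B₁^φ ψ = 4ψ} of the Bell operator B₁^φ = XIXZ + XIYY + ZYYZ − ZYXY for its algebraically maximal eigenvalue 4 is exactly the two-dimensional span of |φ_0000⟩ and |φ_1110⟩; in particular every superposition α|φ_0000⟩ + β|φ_1110⟩ attains ⟨B₁^φ⟩ = 4. -/

import Mathlib

open Matrix

/-- Pauli X matrix on a single qubit (basis indexed by `Bool`). -/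
noncomputable def pX : Matrix Bool Bool ℂ := Matrix.of fun b c => if b = c then 0 else 1

/-- Pauli Y matrix on a single qubit. -/
noncomputable def pY : Matrix Bool Bool ℂ :=
  Matrix.of fun b c => if b = c then 0 else if b then Complex.I else -Complex.I

/-- Pauli Z matrix on a single qubit. -/
noncomputable def pZ : Matrix Bool Bool ℂ :=
  Matrix.of fun b c => if b = c then (if b then -1 else 1) else 0

/-- Tensor product of single-qubit matrices, as an operator on the `n`-qubit space
`(Fin n → Bool) → ℂ ≅ ℂ^(2^n)`. -/
noncomputable def tensorOp {n : ℕ} (M : Fin n → Matrix Bool Bool ℂ) :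
    Matrix (Fin n → Bool) (Fin n → Bool) ℂ :=
  Matrix.of fun f g => ∏ i, M i (f i) (g i)

/-- The 4-qubit linear cluster state `|φ_0000⟩` (graph state of the path `1–2–3–4`):
amplitude `(1/4)·(−1)^(f(1)f(2)+f(2)f(3)+f(3)f(4))` at `|f⟩`. -/
noncomputable def cluster4 : (Fin 4 → Bool) → ℂ := fun f =>
  (1 / 4 : ℂ) * (if f 0 && f 1 then -1 else 1) * (if f 1 && f 2 then -1 else 1)
    * (if f 2 && f 3 then -1 else 1)

/-- `|φ_1110⟩ = Z₁Z₂Z₃|φ_0000⟩`. -/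
noncomputable def cluster4_1110 : (Fin 4 → Bool) → ℂ :=
  Matrix.mulVec (tensorOp ![pZ, pZ, pZ, 1]) cluster4

/-- The Bell operator `B₁^φ = XIXZ + XIYY + ZYYZ − ZYXY`. -/
noncomputable def bellB1 : Matrix (Fin 4 → Bool) (Fin 4 → Bool) ℂ :=
  tensorOp ![pX, 1, pX, pZ] + tensorOp ![pX, 1, pY, pY]
    + tensorOp ![pZ, pY, pY, pZ] - tensorOp ![pZ, pY, pX, pY]

def pe4 : (Bool × Bool × Bool × Bool) ≃ (Fin 4 → Bool) where
  toFun := fun x => ![x.1, x.2.1, x.2.2.1, x.2.2.2]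
  invFun := fun f => (f 0, f 1, f 2, f 3)
  left_inv := fun x => rfl
  right_inv := fun f => by funext i; fin_cases i <;> rfl

lemma sum_pi4 (g : (Fin 4 → Bool) → ℂ) :
    ∑ f, g f = ∑ a, ∑ b, ∑ c, ∑ d, g ![a, b, c, d] := by
  rw [← pe4.sum_comp]
  simp [Fintype.sum_prod_type, pe4, Equiv.coe_fn_mk]
  rfl

lemma hf4 (f : Fin 4 → Bool) : f = ![f 0, f 1, f 2, f 3] := by
  funext i; fin_cases i <;> rfl

set_option maxHeartbeats 2000000 in
lemma c1110_eq : cluster4_1110 = fun f => cluster4 f *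
    ((if f 0 then -1 else 1) * (if f 1 then -1 else 1) * (if f 2 then -1 else 1)) := by
  have key : ∀ a b c d : Bool, (∑ x, tensorOp ![pZ, pZ, pZ, 1] ![a,b,c,d] x * cluster4 x)
      = cluster4 ![a,b,c,d] *
        ((if a then -1 else 1) * (if b then -1 else 1) * (if c then -1 else 1)) := by
    intro a b c d
    rw [sum_pi4]
    cases a <;> cases b <;> cases c <;> cases d <;>
      norm_num [tensorOp, pX, pY, pZ, cluster4, Fintype.sum_bool, Matrix.one_apply, Matrix.sub_apply, Matrix.add_apply, Matrix.of_apply, Fin.prod_univ_four, Matrix.cons_val_zero, Matrix.cons_val_one, Matrix.head_cons, Matrix.cons_val_two, Matrix.tail_cons, Matrix.cons_val_three]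
  funext f
  show Matrix.mulVec _ _ f = _
  simp only [Matrix.mulVec, dotProduct]
  rw [hf4 f]
  exact key (f 0) (f 1) (f 2) (f 3)

set_option maxHeartbeats 2000000 in
lemma eig1 : Matrix.mulVecLin bellB1 cluster4 = (4:ℂ) • cluster4 := by
  have key : ∀ a b c d : Bool,
      (∑ x, bellB1 ![a,b,c,d] x * cluster4 x) = 4 * cluster4 ![a,b,c,d] := by
    intro a b c d
    rw [sum_pi4]
    cases a <;> cases b <;> cases c <;> cases d <;>
      norm_num [bellB1, tensorOp, pX, pY, pZ, cluster4, Fintype.sum_bool, Matrix.one_apply, Matrix.sub_apply, Matrix.add_apply, Matrix.of_apply, Fin.prod_univ_four, Matrix.cons_val_zero, Matrix.cons_val_one, Matrix.head_cons, Matrix.cons_val_two, Matrix.tail_cons, Matrix.cons_val_three]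
  funext f
  simp only [Matrix.mulVecLin_apply, Matrix.mulVec, dotProduct, Pi.smul_apply,
    smul_eq_mul]
  rw [hf4 f]
  exact key _ _ _ _

set_option maxHeartbeats 2000000 in
lemma eig2 : Matrix.mulVecLin bellB1 cluster4_1110 = (4:ℂ) • cluster4_1110 := by
  rw [c1110_eq]
  have key : ∀ a b c d : Bool,
      (∑ x, bellB1 ![a,b,c,d] x * (cluster4 x *
        ((if x 0 then (-1:ℂ) else 1) * (if x 1 then -1 else 1) * (if x 2 then -1 else 1))))
      = 4 * (cluster4 ![a,b,c,d] *
        ((if a then (-1:ℂ) else 1) * (if b then -1 else 1) * (if c then -1 else 1))) := by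
    intro a b c d
    rw [sum_pi4]
    cases a <;> cases b <;> cases c <;> cases d <;>
      norm_num [bellB1, tensorOp, pX, pY, pZ, cluster4, Fintype.sum_bool, Matrix.one_apply, Matrix.sub_apply, Matrix.add_apply, Matrix.of_apply, Fin.prod_univ_four, Matrix.cons_val_zero, Matrix.cons_val_one, Matrix.head_cons, Matrix.cons_val_two, Matrix.tail_cons, Matrix.cons_val_three]
  funext f
  simp only [Matrix.mulVecLin_apply, Matrix.mulVec, dotProduct, Pi.smul_apply,
    smul_eq_mul]
  rw [hf4 f]
  exact key _ _ _ _

set_option maxHeartbeats 4000000 in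
lemma eig_le_span (ψ : (Fin 4 → Bool) → ℂ) (hψ : Matrix.mulVecLin bellB1 ψ = (4:ℂ) • ψ) :
    ψ ∈ Submodule.span ℂ ({cluster4, cluster4_1110} : Set ((Fin 4 → Bool) → ℂ)) := by
  have h : ∀ g : Fin 4 → Bool, (∑ x, bellB1 g x * ψ x) = 4 * ψ g := by
    intro g
    have := congrFun hψ g
    simpa [Matrix.mulVecLin_apply, Matrix.mulVec, dotProduct] using this
  have h0 := h ![false,false,false,false]
  rw [sum_pi4] at h0
  simp only [bellB1, tensorOp, pX, pY, pZ, cluster4, Fintype.sum_bool, Matrix.one_apply, Matrix.sub_apply, Matrix.add_apply, Matrix.of_apply, Fin.prod_univ_four, Matrix.cons_val_zero, Matrix.cons_val_one, Matrix.head_cons, Matrix.cons_val_two, Matrix.tail_cons, Matrix.cons_val_three] at h0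
  norm_num at h0
  have h1 := h ![false,false,false,true]
  rw [sum_pi4] at h1
  simp only [bellB1, tensorOp, pX, pY, pZ, cluster4, Fintype.sum_bool, Matrix.one_apply, Matrix.sub_apply, Matrix.add_apply, Matrix.of_apply, Fin.prod_univ_four, Matrix.cons_val_zero, Matrix.cons_val_one, Matrix.head_cons, Matrix.cons_val_two, Matrix.tail_cons, Matrix.cons_val_three] at h1
  norm_num at h1
  have h2 := h ![false,false,true,false]
  rw [sum_pi4] at h2
  simp only [bellB1, tensorOp, pX, pY, pZ, cluster4, Fintype.sum_bool, Matrix.one_apply, Matrix.sub_apply, Matrix.add_apply, Matrix.of_apply, Fin.prod_univ_four, Matrix.cons_val_zero, Matrix.cons_val_one, Matrix.head_cons, Matrix.cons_val_two, Matrix.tail_cons, Matrix.cons_val_three] at h2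
  norm_num at h2
  have h3 := h ![false,false,true,true]
  rw [sum_pi4] at h3
  simp only [bellB1, tensorOp, pX, pY, pZ, cluster4, Fintype.sum_bool, Matrix.one_apply, Matrix.sub_apply, Matrix.add_apply, Matrix.of_apply, Fin.prod_univ_four, Matrix.cons_val_zero, Matrix.cons_val_one, Matrix.head_cons, Matrix.cons_val_two, Matrix.tail_cons, Matrix.cons_val_three] at h3
  norm_num at h3
  have h4 := h ![false,true,false,false]
  rw [sum_pi4] at h4
  simp only [bellB1, tensorOp, pX, pY, pZ, cluster4, Fintype.sum_bool, Matrix.one_apply, Matrix.sub_apply, Matrix.add_apply, Matrix.of_apply, Fin.prod_univ_four, Matrix.cons_val_zero, Matrix.cons_val_one, Matrix.head_cons, Matrix.cons_val_two, Matrix.tail_cons, Matrix.cons_val_three] at h4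
  norm_num at h4
  have h5 := h ![false,true,false,true]
  rw [sum_pi4] at h5
  simp only [bellB1, tensorOp, pX, pY, pZ, cluster4, Fintype.sum_bool, Matrix.one_apply, Matrix.sub_apply, Matrix.add_apply, Matrix.of_apply, Fin.prod_univ_four, Matrix.cons_val_zero, Matrix.cons_val_one, Matrix.head_cons, Matrix.cons_val_two, Matrix.tail_cons, Matrix.cons_val_three] at h5
  norm_num at h5
  have h6 := h ![false,true,true,false]
  rw [sum_pi4] at h6
  simp only [bellB1, tensorOp, pX, pY, pZ, cluster4, Fintype.sum_bool, Matrix.one_apply, Matrix.sub_apply, Matrix.add_apply, Matrix.of_apply, Fin.prod_univ_four, Matrix.cons_val_zero, Matrix.cons_val_one, Matrix.head_cons, Matrix.cons_val_two, Matrix.tail_cons, Matrix.cons_val_three] at h6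
  norm_num at h6
  have h7 := h ![false,true,true,true]
  rw [sum_pi4] at h7
  simp only [bellB1, tensorOp, pX, pY, pZ, cluster4, Fintype.sum_bool, Matrix.one_apply, Matrix.sub_apply, Matrix.add_apply, Matrix.of_apply, Fin.prod_univ_four, Matrix.cons_val_zero, Matrix.cons_val_one, Matrix.head_cons, Matrix.cons_val_two, Matrix.tail_cons, Matrix.cons_val_three] at h7
  norm_num at h7
  have h8 := h ![true,false,false,false]
  rw [sum_pi4] at h8
  simp only [bellB1, tensorOp, pX, pY, pZ, cluster4, Fintype.sum_bool, Matrix.one_apply, Matrix.sub_apply, Matrix.add_apply, Matrix.of_apply, Fin.prod_univ_four, Matrix.cons_val_zero, Matrix.cons_val_one, Matrix.head_cons, Matrix.cons_val_two, Matrix.tail_cons, Matrix.cons_val_three] at h8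
  norm_num at h8
  have h9 := h ![true,false,false,true]
  rw [sum_pi4] at h9
  simp only [bellB1, tensorOp, pX, pY, pZ, cluster4, Fintype.sum_bool, Matrix.one_apply, Matrix.sub_apply, Matrix.add_apply, Matrix.of_apply, Fin.prod_univ_four, Matrix.cons_val_zero, Matrix.cons_val_one, Matrix.head_cons, Matrix.cons_val_two, Matrix.tail_cons, Matrix.cons_val_three] at h9
  norm_num at h9
  have h10 := h ![true,false,true,false]
  rw [sum_pi4] at h10
  simp only [bellB1, tensorOp, pX, pY, pZ, cluster4, Fintype.sum_bool, Matrix.one_apply, Matrix.sub_apply, Matrix.add_apply, Matrix.of_apply, Fin.prod_univ_four, Matrix.cons_val_zero, Matrix.cons_val_one, Matrix.head_cons, Matrix.cons_val_two, Matrix.tail_cons, Matrix.cons_val_three] at h10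
  norm_num at h10
  have h11 := h ![true,false,true,true]
  rw [sum_pi4] at h11
  simp only [bellB1, tensorOp, pX, pY, pZ, cluster4, Fintype.sum_bool, Matrix.one_apply, Matrix.sub_apply, Matrix.add_apply, Matrix.of_apply, Fin.prod_univ_four, Matrix.cons_val_zero, Matrix.cons_val_one, Matrix.head_cons, Matrix.cons_val_two, Matrix.tail_cons, Matrix.cons_val_three] at h11
  norm_num at h11
  have h12 := h ![true,true,false,false]
  rw [sum_pi4] at h12
  simp only [bellB1, tensorOp, pX, pY, pZ, cluster4, Fintype.sum_bool, Matrix.one_apply, Matrix.sub_apply, Matrix.add_apply, Matrix.of_apply, Fin.prod_univ_four, Matrix.cons_val_zero, Matrix.cons_val_one, Matrix.head_cons, Matrix.cons_val_two, Matrix.tail_cons, Matrix.cons_val_three] at h12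
  norm_num at h12
  have h13 := h ![true,true,false,true]
  rw [sum_pi4] at h13
  simp only [bellB1, tensorOp, pX, pY, pZ, cluster4, Fintype.sum_bool, Matrix.one_apply, Matrix.sub_apply, Matrix.add_apply, Matrix.of_apply, Fin.prod_univ_four, Matrix.cons_val_zero, Matrix.cons_val_one, Matrix.head_cons, Matrix.cons_val_two, Matrix.tail_cons, Matrix.cons_val_three] at h13
  norm_num at h13
  have h14 := h ![true,true,true,false]
  rw [sum_pi4] at h14
  simp only [bellB1, tensorOp, pX, pY, pZ, cluster4, Fintype.sum_bool, Matrix.one_apply, Matrix.sub_apply, Matrix.add_apply, Matrix.of_apply, Fin.prod_univ_four, Matrix.cons_val_zero, Matrix.cons_val_one, Matrix.head_cons, Matrix.cons_val_two, Matrix.tail_cons, Matrix.cons_val_three] at h14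
  norm_num at h14
  have h15 := h ![true,true,true,true]
  rw [sum_pi4] at h15
  simp only [bellB1, tensorOp, pX, pY, pZ, cluster4, Fintype.sum_bool, Matrix.one_apply, Matrix.sub_apply, Matrix.add_apply, Matrix.of_apply, Fin.prod_univ_four, Matrix.cons_val_zero, Matrix.cons_val_one, Matrix.head_cons, Matrix.cons_val_two, Matrix.tail_cons, Matrix.cons_val_three] at h15
  norm_num at h15
  rw [Submodule.mem_span_pair]
  refine ⟨2*(ψ ![false,false,false,false] + ψ ![true,false,false,false]), 2*(ψ ![false,false,false,false] - ψ ![true,false,false,false]), ?_⟩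
  have key : ∀ a b c d : Bool, 2*(ψ ![false,false,false,false] + ψ ![true,false,false,false]) * cluster4 ![a,b,c,d]
      + 2*(ψ ![false,false,false,false] - ψ ![true,false,false,false]) * cluster4_1110 ![a,b,c,d] = ψ ![a,b,c,d] := by
    intro a b c d
    cases a <;> cases b <;> cases c <;> cases d
    · -- case (False, False, False, False)
      norm_num [c1110_eq, cluster4, Matrix.cons_val_zero, Matrix.cons_val_one,
        Matrix.head_cons, Matrix.cons_val_two, Matrix.tail_cons, Matrix.cons_val_three]
      linear_combination (0 : ℂ) * h0
    · -- case (False, False, False, True)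
      norm_num [c1110_eq, cluster4, Matrix.cons_val_zero, Matrix.cons_val_one,
        Matrix.head_cons, Matrix.cons_val_two, Matrix.tail_cons, Matrix.cons_val_three]
      linear_combination (-1/4 : ℂ) * h0 + (1/4 : ℂ) * h1
    · -- case (False, False, True, False)
      norm_num [c1110_eq, cluster4, Matrix.cons_val_zero, Matrix.cons_val_one,
        Matrix.head_cons, Matrix.cons_val_two, Matrix.tail_cons, Matrix.cons_val_three]
      linear_combination (1/4 : ℂ) * h2 + (1/16 : ℂ) * h4 + (1/16 : ℂ) * h5 + (-3/16 : ℂ) * h8 + (1/16 : ℂ) * h9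
    · -- case (False, False, True, True)
      norm_num [c1110_eq, cluster4, Matrix.cons_val_zero, Matrix.cons_val_one,
        Matrix.head_cons, Matrix.cons_val_two, Matrix.tail_cons, Matrix.cons_val_three]
      linear_combination (1/4 : ℂ) * h3 + (-1/16 : ℂ) * h4 + (-1/16 : ℂ) * h5 + (3/16 : ℂ) * h8 + (-1/16 : ℂ) * h9
    · -- case (False, True, False, False)
      norm_num [c1110_eq, cluster4, Matrix.cons_val_zero, Matrix.cons_val_one,
        Matrix.head_cons, Matrix.cons_val_two, Matrix.tail_cons, Matrix.cons_val_three]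
      linear_combination (1/4 : ℂ) * h4 + (-1/4 : ℂ) * h8
    · -- case (False, True, False, True)
      norm_num [c1110_eq, cluster4, Matrix.cons_val_zero, Matrix.cons_val_one,
        Matrix.head_cons, Matrix.cons_val_two, Matrix.tail_cons, Matrix.cons_val_three]
      linear_combination (1/4 : ℂ) * h5 + (-1/4 : ℂ) * h8
    · -- case (False, True, True, False)
      norm_num [c1110_eq, cluster4, Matrix.cons_val_zero, Matrix.cons_val_one,
        Matrix.head_cons, Matrix.cons_val_two, Matrix.tail_cons, Matrix.cons_val_three]
      linear_combination (1/4 : ℂ) * h0 + (3/16 : ℂ) * h6 + (1/16 : ℂ) * h7 + (1/16 : ℂ) * h10 + (-1/16 : ℂ) * h11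
    · -- case (False, True, True, True)
      norm_num [c1110_eq, cluster4, Matrix.cons_val_zero, Matrix.cons_val_one,
        Matrix.head_cons, Matrix.cons_val_two, Matrix.tail_cons, Matrix.cons_val_three]
      linear_combination (-1/4 : ℂ) * h0 + (1/16 : ℂ) * h6 + (3/16 : ℂ) * h7 + (-1/16 : ℂ) * h10 + (1/16 : ℂ) * h11
    · -- case (True, False, False, False)
      norm_num [c1110_eq, cluster4, Matrix.cons_val_zero, Matrix.cons_val_one,
        Matrix.head_cons, Matrix.cons_val_two, Matrix.tail_cons, Matrix.cons_val_three]
      linear_combination (0 : ℂ) * h0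
    · -- case (True, False, False, True)
      norm_num [c1110_eq, cluster4, Matrix.cons_val_zero, Matrix.cons_val_one,
        Matrix.head_cons, Matrix.cons_val_two, Matrix.tail_cons, Matrix.cons_val_three]
      linear_combination (-1/4 : ℂ) * h8 + (1/4 : ℂ) * h9
    · -- case (True, False, True, False)
      norm_num [c1110_eq, cluster4, Matrix.cons_val_zero, Matrix.cons_val_one,
        Matrix.head_cons, Matrix.cons_val_two, Matrix.tail_cons, Matrix.cons_val_three]
      linear_combination (-1/4 : ℂ) * h0 + (1/16 : ℂ) * h6 + (-1/16 : ℂ) * h7 + (3/16 : ℂ) * h10 + (1/16 : ℂ) * h11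
    · -- case (True, False, True, True)
      norm_num [c1110_eq, cluster4, Matrix.cons_val_zero, Matrix.cons_val_one,
        Matrix.head_cons, Matrix.cons_val_two, Matrix.tail_cons, Matrix.cons_val_three]
      linear_combination (1/4 : ℂ) * h0 + (-1/16 : ℂ) * h6 + (1/16 : ℂ) * h7 + (1/16 : ℂ) * h10 + (3/16 : ℂ) * h11
    · -- case (True, True, False, False)
      norm_num [c1110_eq, cluster4, Matrix.cons_val_zero, Matrix.cons_val_one,
        Matrix.head_cons, Matrix.cons_val_two, Matrix.tail_cons, Matrix.cons_val_three]
      linear_combination (1/4 : ℂ) * h0 + (1/4 : ℂ) * h12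
    · -- case (True, True, False, True)
      norm_num [c1110_eq, cluster4, Matrix.cons_val_zero, Matrix.cons_val_one,
        Matrix.head_cons, Matrix.cons_val_two, Matrix.tail_cons, Matrix.cons_val_three]
      linear_combination (1/2 : ℂ) * h0 + (1/4 : ℂ) * h1 + (-1/4 : ℂ) * h6 + (1/4 : ℂ) * h7 + (1/4 : ℂ) * h10 + (-1/4 : ℂ) * h11 + (-1/4 : ℂ) * h12
    · -- case (True, True, True, False)
      norm_num [c1110_eq, cluster4, Matrix.cons_val_zero, Matrix.cons_val_one,
        Matrix.head_cons, Matrix.cons_val_two, Matrix.tail_cons, Matrix.cons_val_three]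
      linear_combination (1/16 : ℂ) * h4 + (1/16 : ℂ) * h5 + (-3/16 : ℂ) * h8 + (1/16 : ℂ) * h9 + (1/4 : ℂ) * h14
    · -- case (True, True, True, True)
      norm_num [c1110_eq, cluster4, Matrix.cons_val_zero, Matrix.cons_val_one,
        Matrix.head_cons, Matrix.cons_val_two, Matrix.tail_cons, Matrix.cons_val_three]
      linear_combination (1/4 : ℂ) * h2 + (-1/4 : ℂ) * h3 + (3/16 : ℂ) * h4 + (3/16 : ℂ) * h5 + (7/16 : ℂ) * h8 + (3/16 : ℂ) * h9 + (1/4 : ℂ) * h14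
  funext f
  simp only [Pi.add_apply, Pi.smul_apply, smul_eq_mul]
  rw [hf4 f]
  exact key _ _ _ _

lemma hli : LinearIndependent ℂ ![cluster4, cluster4_1110] := by
  rw [LinearIndependent.pair_iff]
  intro s t hst
  have h1 := congrFun hst ![false,false,false,false]
  have h2 := congrFun hst ![true,false,false,false]
  simp only [c1110_eq, cluster4, Pi.add_apply, Pi.smul_apply, smul_eq_mul, Pi.zero_apply,
    Matrix.cons_val_zero, Matrix.cons_val_one, Matrix.head_cons, Matrix.cons_val_two,
    Matrix.tail_cons, Matrix.cons_val_three] at h1 h2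
  norm_num at h1 h2
  constructor
  · linear_combination 2*h1 + 2*h2
  · linear_combination 2*h1 - 2*h2

theorem stmt6 :
    Module.End.eigenspace (Matrix.mulVecLin bellB1) (4 : ℂ)
      = Submodule.span ℂ ({cluster4, cluster4_1110} : Set ((Fin 4 → Bool) → ℂ)) ∧
    Module.finrank ℂ
      ↥(Submodule.span ℂ ({cluster4, cluster4_1110} : Set ((Fin 4 → Bool) → ℂ))) = 2 := by
  constructor
  · apply le_antisymm
    · intro ψ hψ
      rw [Module.End.mem_eigenspace_iff] at hψ
      exact eig_le_span ψ hψ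
    · rw [Submodule.span_le]
      rintro x hx
      simp only [Set.mem_insert_iff, Set.mem_singleton_iff] at hx
      rcases hx with rfl | rfl
      · exact Module.End.mem_eigenspace_iff.mpr eig1
      · exact Module.End.mem_eigenspace_iff.mpr eig2
  · have hr : Set.range ![cluster4, cluster4_1110]
        = ({cluster4, cluster4_1110} : Set ((Fin 4 → Bool) → ℂ)) := by
      ext x
      simp only [Set.mem_range, Fin.exists_fin_two, Matrix.cons_val_zero, Matrix.cons_val_one,
        Matrix.head_cons, Set.mem_insert_iff, Set.mem_singleton_iff]
      constructor
      · rintro (rfl | rfl)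
        · exact Or.inl rfl
        · exact Or.inr rfl
      · rintro (rfl | rfl)
        · exact Or.inl rfl
        · exact Or.inr rfl
    rw [← hr, finrank_span_eq_card hli]
    simp
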